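/- arXiv:2108.10094 — 5 statements merged into one kernel-verified Lean document; each statement's English description precedes it below -/
import Mathlib

section
/- The numerical range of a sesquilinear form h on a complex inner product space, defined as the set of values h[ψ,ψ] over unit vectors ψ in the domain of h, is a convex subset of ℂ. -/
open Complex
open scoped InnerProductSpace

/-- The numerical range of a sesquilinear form `h` on a subspace `K` of a
complex Hilbert space — the set of values `h[ψ,ψ]` over unit vectors `ψ ∈ K` — is a convex
subset of `ℂ`. -/
theorem numericalRange_convex {H : Type*} [NormedAddCommGroup H] [InnerProductSpace ℂ H]
    (K : Submodule ℂ H) (h : H →ₗ⋆[ℂ] H →ₗ[ℂ] ℂ) :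
    Convex ℝ {z : ℂ | ∃ ψ : H, ψ ∈ K ∧ ‖ψ‖ = 1 ∧ h ψ ψ = z} := by
  intro x hx y hy α β hα hβ hαβ
  obtain ⟨ψ, hψK, hψ1, ha⟩ := hx
  obtain ⟨φ, hφK, hφ1, hb⟩ := hy
  set a : ℂ := h ψ ψ with ha'
  set b : ℂ := h φ φ with hb'
  subst ha hb
  by_cases hab : a = b
  · refine ⟨ψ, hψK, hψ1, ?_⟩
    show a = α • a + β • b
    rw [hab, Complex.real_smul, Complex.real_smul, ← add_mul, ← Complex.ofReal_add, hαβ]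
    simp
  have hab' : a - b ≠ 0 := sub_ne_zero.mpr hab
  -- inner products of unit vectors
  have hψψ : (inner ℂ ψ ψ : ℂ) = 1 := by
    rw [inner_self_eq_norm_sq_to_K, hψ1]; norm_num
  have hφφ : (inner ℂ φ φ : ℂ) = 1 := by
    rw [inner_self_eq_norm_sq_to_K, hφ1]; norm_num
  -- cross terms of the normalized form g = (h - b⟪·,·⟫)/(a-b)
  set c : ℂ := (a - b)⁻¹ * (h ψ φ - b * (inner ℂ ψ φ : ℂ)) with hc
  set d : ℂ := (a - b)⁻¹ * (h φ ψ - b * (inner ℂ φ ψ : ℂ)) with hd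
  set w : ℂ := c - (starRingEnd ℂ) d with hw
  -- choose a unit phase u making u*c + conj u * d real
  set u : ℂ := if w = 0 then 1 else (starRingEnd ℂ) w / ‖w‖ with hu
  have hu1 : ‖u‖ = 1 := by
    rw [hu]
    split_ifs with h0
    · simp
    · rw [norm_div, RCLike.norm_conj]
      rw [Complex.norm_real, Real.norm_eq_abs, abs_norm, div_self (norm_ne_zero_iff.mpr h0)]
  have huw : (u * w).im = 0 := by
    rw [hu]
    split_ifs with h0
    · simp [h0]
    · rw [div_mul_eq_mul_div, ← Complex.normSq_eq_conj_mul_self]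
      rw [show ((Complex.normSq w : ℂ)) / ((‖w‖:ℝ):ℂ) = (((Complex.normSq w) / ‖w‖ : ℝ) : ℂ) by
        push_cast; ring]
      simp
  set ρ : ℂ := u * c + (starRingEnd ℂ) u * d with hρdef
  have hρim : ρ.im = 0 := by
    have e : ρ = u * w + ((starRingEnd ℂ) u * d + (starRingEnd ℂ) ((starRingEnd ℂ) u * d)) := by
      rw [hρdef, hw]; simp only [map_mul, Complex.conj_conj]; ring
    rw [e]
    rw [Complex.add_conj]
    simp [huw]
  have hρ : ρ = ((ρ.re : ℝ) : ℂ) := by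
    apply Complex.ext <;> simp [hρim]
  have huu : (starRingEnd ℂ) u * u = 1 := by
    rw [← Complex.normSq_eq_conj_mul_self, Complex.normSq_eq_norm_sq, hu1]
    norm_num
  -- the path
  set v : ℝ → H := fun s => ((s : ℝ) : ℂ) • ψ + (((1 - s : ℝ)) : ℂ) • (u • φ) with hv
  -- key algebraic identity
  have key : ∀ s : ℝ, h (v s) (v s)
      = b * (inner ℂ (v s) (v s) : ℂ) + (a - b) * ((s:ℂ)^2 + (s:ℂ) * ((1-s:ℝ):ℂ) * ρ) := by
    intro s
    simp only [hv, map_add, LinearMap.add_apply, LinearMap.map_smulₛₗ, map_smul,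
      LinearMap.smul_apply, smul_eq_mul, inner_add_add_self, inner_add_left, inner_add_right,
      inner_smul_left, inner_smul_right, Complex.conj_ofReal, map_mul, Complex.conj_conj,
      hψψ, hφφ, ← ha', ← hb', hρdef]
    rw [hc, hd]
    field_simp
    ring
  -- the path does not vanish on [0,1]
  have hvnz : ∀ s : ℝ, v s ≠ 0 := by
    intro s hvs
    by_cases hs0 : s = 0
    · subst hs0
      simp only [hv, Complex.ofReal_zero, zero_smul, sub_zero, Complex.ofReal_one, one_smul,
        zero_add] at hvs
      have : ‖u • φ‖ = 1 := by rw [norm_smul, hu1, hφ1, one_mul]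
      rw [hvs] at this
      simp at this
    · have hsC : ((s:ℝ):ℂ) ≠ 0 := Complex.ofReal_ne_zero.mpr hs0
      have h1 : ((s:ℝ):ℂ) • ψ = (-(((1 - s):ℝ):ℂ)) • (u • φ) := by
        rw [neg_smul]
        exact eq_neg_of_add_eq_zero_left hvs
      set μ : ℂ := ((s:ℝ):ℂ)⁻¹ * (-(((1 - s):ℝ):ℂ)) with hμ
      have hψeq : ψ = μ • (u • φ) := by
        have h2 : ((s:ℝ):ℂ)⁻¹ • (((s:ℝ):ℂ) • ψ)
            = ((s:ℝ):ℂ)⁻¹ • ((-(((1 - s):ℝ):ℂ)) • (u • φ)) := by rw [h1]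
        rwa [smul_smul, smul_smul, inv_mul_cancel₀ hsC, one_smul, ← hμ] at h2
      have hμconj : (starRingEnd ℂ) μ = μ := by
        rw [hμ]
        simp [map_inv₀, Complex.conj_ofReal]
      have hμnorm : ‖μ‖ = 1 := by
        have : ‖ψ‖ = ‖μ‖ * (‖u‖ * ‖φ‖) := by rw [hψeq, norm_smul, norm_smul]
        rw [hψ1, hu1, hφ1, one_mul, mul_one] at this
        exact this.symm
      have hμμ : (starRingEnd ℂ) μ * μ = 1 := by
        rw [← Complex.normSq_eq_conj_mul_self, Complex.normSq_eq_norm_sq,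
          hμnorm]
        norm_num
      have : a = ((starRingEnd ℂ) μ * μ) * (((starRingEnd ℂ) u * u) * b) := by
        rw [ha', hψeq]
        simp only [map_smul, LinearMap.map_smulₛₗ, LinearMap.smul_apply, smul_eq_mul, ← hb']
        ring
      rw [hμμ, huu, one_mul, one_mul] at this
      exact hab this
  have hvcont : Continuous v := by
    apply Continuous.add
    · exact (Complex.continuous_ofReal.comp continuous_id).smul continuous_const
    · exact (Complex.continuous_ofReal.comp (continuous_const.sub continuous_id)).smul
        continuous_const
  set F : ℝ → ℝ := fun s => (s ^ 2 + s * (1 - s) * ρ.re) / ‖v s‖ ^ 2 with hF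
  have hFcont : ContinuousOn F (Set.Icc 0 1) := by
    apply ContinuousOn.div
    · fun_prop
    · exact ((hvcont.norm.pow 2)).continuousOn
    · intro s _
      exact pow_ne_zero 2 (norm_ne_zero_iff.mpr (hvnz s))
  have hv1 : v 1 = ψ := by
    simp [hv]
  have hF0 : F 0 = 0 := by simp [hF]
  have hF1 : F 1 = 1 := by
    rw [hF]
    simp [hv1, hψ1]
  have hα1 : α ≤ 1 := by linarith
  have hmem : α ∈ Set.Icc (F 0) (F 1) := by rw [hF0, hF1]; exact ⟨hα, hα1⟩
  obtain ⟨s, _, hFs⟩ := intermediate_value_Icc zero_le_one hFcont hmem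
  set N : ℝ := ‖v s‖ with hN
  have hNne : N ≠ 0 := norm_ne_zero_iff.mpr (hvnz s)
  have hNC : ((N:ℝ):ℂ) ≠ 0 := Complex.ofReal_ne_zero.mpr hNne
  refine ⟨((N:ℝ):ℂ)⁻¹ • v s, ?_, ?_, ?_⟩
  · exact K.smul_mem _ (K.add_mem (K.smul_mem _ hψK) (K.smul_mem _ (K.smul_mem _ hφK)))
  · rw [norm_smul, norm_inv, Complex.norm_real, Real.norm_eq_abs, abs_norm, ← hN,
      inv_mul_cancel₀ hNne]
  · have hβ' : β = 1 - α := by linarith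
    have hFsC : ((s:ℂ) ^ 2 + (s:ℂ) * ((1 - s : ℝ):ℂ) * ((ρ.re : ℝ):ℂ)) / ((N:ℝ):ℂ) ^ 2
        = ((α:ℝ):ℂ) := by
      rw [← hFs, hF]
      push_cast [← hN]
      ring
    have hval : h (((N:ℝ):ℂ)⁻¹ • v s) (((N:ℝ):ℂ)⁻¹ • v s)
        = ((N:ℝ):ℂ)⁻¹ * (((N:ℝ):ℂ)⁻¹ * h (v s) (v s)) := by
      simp only [LinearMap.map_smulₛₗ, map_smul, LinearMap.smul_apply, smul_eq_mul, map_inv₀,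
        Complex.conj_ofReal]
    rw [hval, key s, hρ, inner_self_eq_norm_sq_to_K, ← hN, hβ', Complex.real_smul,
      Complex.real_smul]
    push_cast
    rw [div_eq_iff (pow_ne_zero 2 hNC)] at hFsC
    push_cast at hFsC ⊢
    field_simp
    linear_combination (a - b) * hFsC
end

section
/- For a symmetric operator T on a complex Hilbert space whose numerical range is bounded below, the infimum of the numerical range belongs to the spectrum of T. -/
/-- The resolvent set of a (possibly unbounded) operator `T` defined on the subspace `dom`
of `H`: those `ζ` such that `T - ζ` has a bounded everywhere-defined (two-sided) inverse. -/
def ResolventSet {H : Type*} [NormedAddCommGroup H] [NormedSpace ℂ H]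
    (dom : Submodule ℂ H) (T : dom →ₗ[ℂ] H) : Set ℂ :=
  {ζ | ∃ (R : H →L[ℂ] H) (hmem : ∀ y : H, R y ∈ dom),
    (∀ y : H, T ⟨R y, hmem y⟩ - ζ • R y = y) ∧
    (∀ x : dom, R (T x - ζ • (x : H)) = (x : H))}

/-- For a symmetric operator `T` on a complex Hilbert space whose numerical
range is bounded below, the infimum of the numerical range belongs to the spectrum of `T`
(the complement of the resolvent set). -/
theorem csInf_numericalRange_mem_spectrum {H : Type*} [NormedAddCommGroup H]
    [InnerProductSpace ℂ H] [CompleteSpace H] (dom : Submodule ℂ H) (T : dom →ₗ[ℂ] H)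
    (hsymm : ∀ x y : dom, (inner ℂ ((x : H)) (T y) : ℂ) = inner ℂ (T x) ((y : H)))
    (Num : Set ℝ)
    (hNum : Num = {r : ℝ | ∃ ψ : dom, ‖(ψ : H)‖ = 1 ∧ (inner ℂ ((ψ : H)) (T ψ) : ℂ) = (r : ℂ)})
    (hne : Num.Nonempty) (hbdd : BddBelow Num) :
    ((sInf Num : ℝ) : ℂ) ∉ ResolventSet dom T := by
  intro hres
  obtain ⟨R, hmem, h1, h2⟩ := hres
  set m : ℝ := sInf Num with hm
  -- the shifted form
  set B : dom → dom → ℂ := fun x y => inner ℂ ((x : H)) (T y - (m : ℂ) • (y : H)) with hB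
  have hBval : ∀ x y : dom, B x y
      = (inner ℂ ((x : H)) (T y) : ℂ) - (m : ℂ) * inner ℂ ((x : H)) ((y : H)) := by
    intro x y
    rw [hB]
    simp only [inner_sub_right, inner_smul_right]
  -- diagonal values of the unshifted form are real
  have hreal : ∀ x : dom, (inner ℂ ((x : H)) (T x) : ℂ)
      = (((inner ℂ ((x : H)) (T x) : ℂ)).re : ℂ) := by
    intro x
    have hc : (starRingEnd ℂ) (inner ℂ ((x : H)) (T x) : ℂ) = inner ℂ ((x : H)) (T x) := by
      rw [inner_conj_symm, hsymm x x]
    exact (Complex.conj_eq_iff_re.mp hc).symm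
  -- conjugate symmetry of B
  have hconj : ∀ x y : dom, (starRingEnd ℂ) (B y x) = B x y := by
    intro x y
    rw [hBval, hBval]
    rw [map_sub, map_mul, inner_conj_symm, inner_conj_symm, ← hsymm x y, Complex.conj_ofReal]
  -- nonnegativity of the diagonal of B
  have hpos : ∀ x : dom, 0 ≤ (B x x).re := by
    intro x
    rcases eq_or_ne ((x : H)) 0 with hx | hx
    · simp [hBval, hx]
    · have hn0 : 0 < ‖(x : H)‖ := norm_pos_iff.mpr hx
      set ψ : dom := ((‖(x : H)‖⁻¹ : ℝ) : ℂ) • x with hψ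
      have hψ1 : ‖(ψ : H)‖ = 1 := by
        rw [hψ, Submodule.coe_smul, norm_smul, Complex.norm_real, Real.norm_eq_abs,
          abs_of_pos (inv_pos.mpr hn0)]
        exact inv_mul_cancel₀ hn0.ne'
      have hinner : (inner ℂ ((ψ : H)) (T ψ) : ℂ)
          = ((((inner ℂ ((x : H)) (T x) : ℂ)).re / ‖(x : H)‖ ^ 2 : ℝ) : ℂ) := by
        have hTψ : T ψ = ((‖(x : H)‖⁻¹ : ℝ) : ℂ) • T x := by rw [hψ, map_smul]
        rw [hTψ, hψ]
        simp only [Submodule.coe_smul, inner_smul_left, inner_smul_right, Complex.conj_ofReal]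
        rw [hreal x]
        have hne' : ((‖(x : H)‖ : ℝ) : ℂ) ≠ 0 := by
          exact_mod_cast hn0.ne'
        push_cast
        field_simp
        norm_cast
      have hmr : m ≤ ((((inner ℂ ((x : H)) (T x) : ℂ)).re / ‖(x : H)‖ ^ 2 : ℝ)) :=
        csInf_le hbdd (by rw [hNum]; exact ⟨ψ, hψ1, hinner⟩)
      have hn2 : (0 : ℝ) < ‖(x : H)‖ ^ 2 := by positivity
      have h1' : m * ‖(x : H)‖ ^ 2 ≤ ((inner ℂ ((x : H)) (T x) : ℂ)).re :=
        (le_div_iff₀ hn2).mp hmr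
      have hre : (inner ℂ ((x : H)) ((x : H)) : ℂ).re = ‖(x : H)‖ ^ 2 := by
        simpa using inner_self_eq_norm_sq (𝕜 := ℂ) ((x : H))
      have him : (inner ℂ ((x : H)) ((x : H)) : ℂ).im = 0 := by
        exact inner_self_im (𝕜 := ℂ) ((x : H))
      rw [hBval]
      simp only [Complex.sub_re, Complex.mul_re, Complex.ofReal_re, Complex.ofReal_im, hre, him]
      nlinarith [h1']
  -- assemble a PreInnerProductSpace.Core on dom
  letI c : PreInnerProductSpace.Core ℂ dom :=
    { inner := B
      conj_inner_symm := fun x y => hconj x y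
      re_inner_nonneg := fun x => hpos x
      add_left := fun x y z => by
        simp [hB, inner_add_left]
        ring
      smul_left := fun x y r => by
        simp [hB, inner_smul_left]
        ring }
  have CS : ∀ x y : dom, ‖B x y‖ * ‖B y x‖ ≤ (B x x).re * (B y y).re := fun x y => by
    exact @InnerProductSpace.Core.inner_mul_inner_self_le ℂ dom _ _ _ c x y
  -- pick r ∈ Num close to m
  have hRpos : (0 : ℝ) < ‖R‖ + 1 := by positivity
  have hlt : sInf Num < m + (‖R‖ + 1)⁻¹ := by
    have : (0 : ℝ) < (‖R‖ + 1)⁻¹ := by positivity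
    linarith
  obtain ⟨r, hrNum, hrlt⟩ := (csInf_lt_iff hbdd hne).mp hlt
  have hmr : m ≤ r := csInf_le hbdd hrNum
  rw [hNum] at hrNum
  obtain ⟨ψ, hψ1, hψ2⟩ := hrNum
  set x : dom := ⟨R (ψ : H), hmem (ψ : H)⟩ with hx
  have hSx : T x - (m : ℂ) • ((x : H)) = (ψ : H) := h1 (ψ : H)
  -- B ψ x = 1
  have hBψx : B ψ x = 1 := by
    rw [hB]
    simp only
    rw [hSx, inner_self_eq_norm_sq_to_K, hψ1]
    norm_num
  have hBxψ : B x ψ = 1 := by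
    rw [← hconj x ψ, hBψx, map_one]
  -- B ψ ψ = r - m
  have hBψψ : (B ψ ψ).re = r - m := by
    rw [hBval, hψ2, inner_self_eq_norm_sq_to_K, hψ1]
    norm_num
  -- B x x ≤ ‖R‖
  have hBxx : (B x x).re ≤ ‖R‖ := by
    rw [hB]
    simp only
    rw [hSx]
    have hre : ((inner ℂ ((x : H)) ((ψ : H)) : ℂ)).re ≤ ‖(x : H)‖ * ‖(ψ : H)‖ := by
      simpa using re_inner_le_norm (𝕜 := ℂ) ((x : H)) ((ψ : H))
    have hxle : ‖(x : H)‖ ≤ ‖R‖ := by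
      have h := R.le_opNorm (ψ : H)
      rw [hψ1, mul_one] at h
      exact h
    calc ((inner ℂ ((x : H)) ((ψ : H)) : ℂ)).re ≤ ‖(x : H)‖ * ‖(ψ : H)‖ := hre
      _ ≤ ‖R‖ := by rw [hψ1, mul_one]; exact hxle
  have hkey := CS x ψ
  rw [hBxψ, hBψx, hBψψ] at hkey
  simp only [norm_one, one_mul] at hkey
  have hBxx0 : 0 ≤ (B x x).re := hpos x
  have hrm : 0 ≤ r - m := by linarith
  have h1le : (1 : ℝ) ≤ ‖R‖ * (r - m) := by
    calc (1 : ℝ) ≤ (B x x).re * (r - m) := hkey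
      _ ≤ ‖R‖ * (r - m) := by nlinarith
  have hsmall : r - m < (‖R‖ + 1)⁻¹ := by linarith
  have hcontra : ‖R‖ * (r - m) < 1 := by
    have h : ‖R‖ * (r - m) ≤ ‖R‖ * (‖R‖ + 1)⁻¹ :=
      mul_le_mul_of_nonneg_left (le_of_lt hsmall) (norm_nonneg R)
    have h2 : ‖R‖ * (‖R‖ + 1)⁻¹ < 1 := by
      rw [mul_inv_lt_iff₀ hRpos]
      linarith
    linarith
  linarith
end

section
/- Let T be an operator on a complex Hilbert space. Each connected component of ℂ \ closure(Num T) is either disjoint from the resolvent set of T or entirely contained in it. -/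
section aux

variable {H : Type*} [NormedAddCommGroup H] [InnerProductSpace ℂ H]
  (dom : Submodule ℂ H) (T : dom →ₗ[ℂ] H)

/-- The resolvent bound `‖R y‖ * d ≤ ‖y‖` where `d` is a lower bound on distances to the
numerical range. -/
lemma aux_bound (Num : Set ℂ)
    (hNum : Num = {z : ℂ | ∃ ψ : dom, ‖(ψ : H)‖ = 1 ∧ (inner ℂ ((ψ : H)) (T ψ) : ℂ) = z})
    {ζ : ℂ} {R : H →L[ℂ] H} (hmem : ∀ y, R y ∈ dom)
    (h1 : ∀ y : H, T ⟨R y, hmem y⟩ - ζ • R y = y)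
    {d : ℝ} (hd : ∀ w ∈ Num, d ≤ dist ζ w) (y : H) :
    ‖R y‖ * d ≤ ‖y‖ := by
  by_cases hx : R y = 0
  · simp [hx, norm_nonneg]
  · set n : ℝ := ‖R y‖ with hn_def
    have hn : 0 < n := norm_pos_iff.2 hx
    have hnC : (n : ℂ) ≠ 0 := by exact_mod_cast hn.ne'
    set x : dom := ⟨R y, hmem y⟩ with hx_def
    set ψ : dom := ((n : ℂ)⁻¹) • x with hψ_def
    have hψcoe : (ψ : H) = ((n : ℂ)⁻¹) • (R y) := rfl
    have hψnorm : ‖(ψ : H)‖ = 1 := by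
      rw [hψcoe, norm_smul]
      simp [hn.ne', abs_of_pos hn]
      exact inv_mul_cancel₀ hn.ne'
    set z : ℂ := (inner ℂ ((ψ : H)) (T ψ) : ℂ) with hz_def
    have hzNum : z ∈ Num := by
      rw [hNum]; exact ⟨ψ, hψnorm, rfl⟩
    have hTx : (T x : H) = y + ζ • (R y) := by
      have := h1 y
      rw [sub_eq_iff_eq_add] at this
      rw [this]
    have hinner : (inner ℂ ((R y : H)) ((T x : H)) : ℂ)
        = inner ℂ ((R y : H)) y + ζ * (n : ℂ) ^ 2 := by
      rw [hTx, inner_add_right, inner_smul_right, inner_self_eq_norm_sq_to_K, hn_def]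
      norm_cast
    have hz2 : z = (n : ℂ)⁻¹ * ((n : ℂ)⁻¹ * (inner ℂ ((R y : H)) ((T x : H)) : ℂ)) := by
      rw [hz_def, hψ_def, LinearMap.map_smul]
      have : ((((n : ℂ)⁻¹) • x : dom) : H) = ((n : ℂ)⁻¹) • (x : H) := rfl
      rw [this]
      rw [inner_smul_left, inner_smul_right]
      congr 1
      simp [Complex.conj_ofReal]
    have hkey : (z - ζ) * (n : ℂ) ^ 2 = inner ℂ ((R y : H)) y := by
      rw [hz2, hinner]
      field_simp
      ring
    have hnorm1 : ‖z - ζ‖ * n ^ 2 ≤ n * ‖y‖ := by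
      have : ‖(z - ζ) * (n : ℂ) ^ 2‖ = ‖z - ζ‖ * n ^ 2 := by
        rw [norm_mul]
        congr 1
        rw [norm_pow]
        congr 1
        simp [abs_of_pos hn]
      rw [← this, hkey]
      exact norm_inner_le_norm _ _
    have hdz : d ≤ ‖z - ζ‖ := by
      have := hd z hzNum
      rwa [dist_eq_norm, norm_sub_rev] at this
    nlinarith [mul_le_mul_of_nonneg_left hdz hn.le, norm_nonneg y]

/-- Neumann-series perturbation: if `ζ` is a resolvent point with resolvent `R` and
`‖(μ - ζ) • R‖ < 1`, then `μ` is a resolvent point. -/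
lemma aux_perturb [CompleteSpace H] {ζ μ : ℂ} (R : H →L[ℂ] H) (hmem : ∀ y, R y ∈ dom)
    (h1 : ∀ y : H, T ⟨R y, hmem y⟩ - ζ • R y = y)
    (h2 : ∀ x : dom, R (T x - ζ • (x : H)) = (x : H))
    (ha : ‖(μ - ζ) • R‖ < 1) : μ ∈ ResolventSet dom T := by
  set a : H →L[ℂ] H := (μ - ζ) • R with ha_def
  let u : (H →L[ℂ] H)ˣ := Units.oneSub a ha
  set S : H →L[ℂ] H := ((u⁻¹ : (H →L[ℂ] H)ˣ) : H →L[ℂ] H) with hS_def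
  have huval : (u : H →L[ℂ] H) = 1 - a := rfl
  have hcomm : Commute R S := by
    have h : Commute R ((u : H →L[ℂ] H)) := by
      rw [huval]
      exact (Commute.one_right R).sub_right ((Commute.refl R).smul_right _)
    exact h.units_inv_right
  have hswap : ∀ w : H, R (S w) = S (R w) := by
    intro w
    have := congrArg (fun f : H →L[ℂ] H => f w) hcomm.eq
    exact this
  have hS1 : ∀ w : H, S w - (μ - ζ) • R (S w) = w := by
    intro w
    have h := congrArg (fun f : H →L[ℂ] H => f w) u.mul_inv
    simp only [huval] at h
    have : ((1 - a) * S) w = S w - (μ - ζ) • R (S w) := by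
      simp [ha_def, ContinuousLinearMap.mul_apply, ContinuousLinearMap.sub_apply,
        ContinuousLinearMap.smul_apply]
    rw [this] at h
    simpa using h
  have hS2 : ∀ w : H, S (w - (μ - ζ) • R w) = w := by
    intro w
    have h := congrArg (fun f : H →L[ℂ] H => f w) u.inv_mul
    simp only [huval] at h
    have : (S * (1 - a)) w = S (w - (μ - ζ) • R w) := by
      simp [ha_def, ContinuousLinearMap.mul_apply, ContinuousLinearMap.sub_apply,
        ContinuousLinearMap.smul_apply]
    rw [this] at h
    simpa using h
  refine ⟨R.comp S, fun y => hmem (S y), fun y => ?_, fun x => ?_⟩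
  · show T ⟨R (S y), hmem (S y)⟩ - μ • R (S y) = y
    have e1 := h1 (S y)
    have e2 := hS1 y
    have : T ⟨R (S y), hmem (S y)⟩ - μ • R (S y)
        = (T ⟨R (S y), hmem (S y)⟩ - ζ • R (S y)) - (μ - ζ) • R (S y) := by
      module
    rw [this, e1, e2]
  · show R (S ((T x : H) - μ • (x : H))) = (x : H)
    rw [hswap]
    have : R ((T x : H) - μ • (x : H))
        = R ((T x : H) - ζ • (x : H)) - (μ - ζ) • R (x : H) := by
      have : (T x : H) - μ • (x : H)
          = ((T x : H) - ζ • (x : H)) - (μ - ζ) • (x : H) := by module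
      rw [this, map_sub, map_smul]
    rw [this, h2 x]
    exact hS2 (x : H)

/-- If `ζ'` is a resolvent point at distance `≥ d` from the numerical range and
`dist μ ζ' < d`, then `μ` is a resolvent point. -/
lemma aux_step [CompleteSpace H] (Num : Set ℂ)
    (hNum : Num = {z : ℂ | ∃ ψ : dom, ‖(ψ : H)‖ = 1 ∧ (inner ℂ ((ψ : H)) (T ψ) : ℂ) = z})
    {ζ μ : ℂ} (hζ : ζ ∈ ResolventSet dom T)
    {d : ℝ} (hd0 : 0 < d) (hd : ∀ w ∈ Num, d ≤ dist ζ w) (hμ : dist μ ζ < d) :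
    μ ∈ ResolventSet dom T := by
  obtain ⟨R, hmem, h1, h2⟩ := hζ
  have hbound := aux_bound dom T Num hNum hmem h1 hd
  have hRnorm : ‖R‖ ≤ d⁻¹ := by
    refine R.opNorm_le_bound (by positivity) fun y => ?_
    calc ‖R y‖ = (‖R y‖ * d) * d⁻¹ := by field_simp
      _ ≤ ‖y‖ * d⁻¹ := mul_le_mul_of_nonneg_right (hbound y) (by positivity)
      _ = d⁻¹ * ‖y‖ := by ring
  have ha : ‖(μ - ζ) • R‖ < 1 := by
    rw [norm_smul]
    have h1' : ‖μ - ζ‖ = dist μ ζ := (dist_eq_norm μ ζ).symm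
    calc ‖μ - ζ‖ * ‖R‖ ≤ ‖μ - ζ‖ * d⁻¹ := by
          exact mul_le_mul_of_nonneg_left hRnorm (norm_nonneg _)
      _ < d * d⁻¹ := by
          apply mul_lt_mul_of_pos_right _ (by positivity)
          rw [h1']; exact hμ
      _ = 1 := mul_inv_cancel₀ hd0.ne'
  exact aux_perturb dom T R hmem h1 h2 ha

end aux

/-- For an operator `T` in a complex Hilbert space, each connected component
of `ℂ \ closure (Num T)` is either entirely contained in the resolvent set of `T` or
disjoint from it. -/
theorem connectedComponent_subset_or_disjoint_resolvent {H : Type*} [NormedAddCommGroup H]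
    [InnerProductSpace ℂ H] [CompleteSpace H] (dom : Submodule ℂ H) (T : dom →ₗ[ℂ] H)
    (Num : Set ℂ)
    (hNum : Num = {z : ℂ | ∃ ψ : dom, ‖(ψ : H)‖ = 1 ∧ (inner ℂ ((ψ : H)) (T ψ) : ℂ) = z}) :
    ∀ z ∈ (closure Num)ᶜ,
      connectedComponentIn (closure Num)ᶜ z ⊆ ResolventSet dom T ∨
      Disjoint (connectedComponentIn (closure Num)ᶜ z) (ResolventSet dom T) := by
  intro z hz
  set U : Set ℂ := (closure Num)ᶜ with hU_def
  -- The resolvent set is open.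
  have hResOpen : IsOpen (ResolventSet dom T) := by
    rw [Metric.isOpen_iff]
    rintro ζ ⟨R, hmem, h1, h2⟩
    refine ⟨(‖R‖ + 1)⁻¹, by positivity, fun μ hμ => ?_⟩
    apply aux_perturb dom T R hmem h1 h2
    rw [norm_smul]
    have hμ' : ‖μ - ζ‖ < (‖R‖ + 1)⁻¹ := by
      rwa [Metric.mem_ball, dist_eq_norm] at hμ
    calc ‖μ - ζ‖ * ‖R‖ ≤ ‖μ - ζ‖ * (‖R‖ + 1) := by
          apply mul_le_mul_of_nonneg_left (by linarith) (norm_nonneg _)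
      _ < (‖R‖ + 1)⁻¹ * (‖R‖ + 1) := by
          apply mul_lt_mul_of_pos_right hμ' (by positivity)
      _ = 1 := inv_mul_cancel₀ (by positivity)
  -- The complement of the resolvent set within `U` is open.
  have hS2Open : IsOpen (U \ ResolventSet dom T) := by
    rw [Metric.isOpen_iff]
    rintro ζ ⟨hζU, hζn⟩
    by_cases hNe : Num.Nonempty
    · have hcl : (closure Num).Nonempty := hNe.closure
      have hdpos : 0 < Metric.infDist ζ (closure Num) :=
        (isClosed_closure.notMem_iff_infDist_pos hcl).1 hζU
      set d := Metric.infDist ζ (closure Num) with hd_def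
      refine ⟨d / 3, by positivity, fun μ hμ => ?_⟩
      rw [Metric.mem_ball] at hμ
      constructor
      · intro hμcl
        have : d ≤ dist ζ μ := Metric.infDist_le_dist_of_mem (x := ζ) hμcl
        rw [dist_comm] at this
        linarith
      · intro hμRes
        refine hζn (aux_step dom T Num hNum hμRes (d := d / 3)
          (by positivity) (fun w hw => ?_) (by rwa [dist_comm] at hμ))
        have hwcl : w ∈ closure Num := subset_closure hw
        have h1 : d ≤ dist ζ w := Metric.infDist_le_dist_of_mem (x := ζ) hwcl
        have h2 : dist ζ w ≤ dist ζ μ + dist μ w := dist_triangle ζ μ w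
        have h3 : dist ζ μ = dist μ ζ := dist_comm ζ μ
        linarith
    · refine ⟨1, one_pos, fun μ hμ => ?_⟩
      have hNumEmpty : Num = ∅ := Set.not_nonempty_iff_eq_empty.1 hNe
      constructor
      · simp [hU_def, hNumEmpty]
      · intro hμRes
        exact hζn (aux_step dom T Num hNum hμRes (d := dist ζ μ + 1)
          (by positivity) (fun w hw => by simp [hNumEmpty] at hw) (by linarith [dist_nonneg (x := ζ) (y := μ)]))
  -- Preconnectedness argument.
  set C := connectedComponentIn U z with hC_def
  have hC : IsPreconnected C := isPreconnected_connectedComponentIn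
  have hCU : C ⊆ U := connectedComponentIn_subset U z
  by_cases h : (C ∩ ResolventSet dom T).Nonempty
  · left
    by_contra hns
    rw [Set.not_subset] at hns
    obtain ⟨w, hwC, hwn⟩ := hns
    have h2 : (C ∩ (U \ ResolventSet dom T)).Nonempty := ⟨w, hwC, hCU hwC, hwn⟩
    obtain ⟨v, hvC, hv1, hv2⟩ := hC (ResolventSet dom T) (U \ ResolventSet dom T)
      hResOpen hS2Open
      (fun w hw => (em (w ∈ ResolventSet dom T)).elim Or.inl fun hn => Or.inr ⟨hCU hw, hn⟩)
      h h2
    exact hv2.2 hv1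
  · right
    exact Set.disjoint_left.2 fun w hwC hwR => h ⟨w, hwC, hwR⟩
end

section
/- Let U be an open convex subset of a complex Banach space X, f : U → Y holomorphic into a complex Banach space Y, and M := ⋂_{x∈U} ker Df(x). Then M is a closed subspace of X and f extends uniquely to a holomorphic function on U + M satisfying f(x + m) = f(x) for all x ∈ U, m ∈ M. -/
open scoped Pointwise
/-- Let `U` be an open convex subset of a complex Banach space `X`,
`f : U → Y` holomorphic into a complex Banach space `Y`, and
`M := ⋂_{x ∈ U} ker Df(x)`.  Then `M` is a closed subspace of `X`, and `f` extends
uniquely to a holomorphic function on `U + M` satisfying `f(x + m) = f(x)` for all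
`x ∈ U`, `m ∈ M`. -/
theorem holomorphic_quotient_extension {X Y : Type*}
    [NormedAddCommGroup X] [NormedSpace ℂ X] [CompleteSpace X]
    [NormedAddCommGroup Y] [NormedSpace ℂ Y] [CompleteSpace Y]
    (U : Set X) (hU : IsOpen U) (hUconv : Convex ℝ U)
    (f : X → Y) (hf : DifferentiableOn ℂ f U)
    (M : Submodule ℂ X)
    (hM : M = ⨅ x ∈ U, LinearMap.ker (fderiv ℂ f x : X →ₗ[ℂ] Y)) :
    IsClosed (M : Set X) ∧
    ∃ g : X → Y,
      DifferentiableOn ℂ g (U + (M : Set X)) ∧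
      (∀ x ∈ U, ∀ m ∈ M, g (x + m) = f x) ∧
      ∀ g' : X → Y, DifferentiableOn ℂ g' (U + (M : Set X)) → Set.EqOn g' f U →
        Set.EqOn g g' (U + (M : Set X)) := by
  classical
  have _inst : Nonempty X := ⟨0⟩
  -- M is contained in every kernel
  have hMker : ∀ z ∈ U, ∀ m ∈ M, fderiv ℂ f z m = 0 := by
    intro z hz m hm
    rw [hM] at hm
    simp only [Submodule.mem_iInf] at hm
    exact hm z hz
  -- closedness
  have hclosed : IsClosed (M : Set X) := by
    have hset : (M : Set X) = ⋂ x ∈ U, (LinearMap.ker (fderiv ℂ f x : X →ₗ[ℂ] Y) : Set X) := by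
      rw [hM]; ext y
      simp [Submodule.mem_iInf]
    rw [hset]
    exact isClosed_biInter fun x _ => ContinuousLinearMap.isClosed_ker (fderiv ℂ f x)
  -- key: f is constant along directions in M, within U
  have key : ∀ x ∈ U, ∀ x' ∈ U, x' - x ∈ M → f x' = f x := by
    intro x hx x' hx' hv
    set v := x' - x with hvdef
    have hseg : ∀ t ∈ Set.Icc (0:ℝ) 1, x + t • v ∈ U := by
      intro t ht
      have h := hUconv hx hx' (by linarith [ht.2] : (0:ℝ) ≤ 1 - t) ht.1 (by ring)
      have : (1 - t) • x + t • x' = x + t • v := by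
        simp only [hvdef, smul_sub, sub_smul, one_smul]; abel
      rwa [this] at h
    have hderiv : ∀ t ∈ Set.Icc (0:ℝ) 1,
        HasDerivWithinAt (fun t : ℝ => f (x + t • v)) 0 (Set.Icc (0:ℝ) 1) t := by
      intro t ht
      have hmem := hseg t ht
      have hfd : HasFDerivAt f (fderiv ℂ f (x + t • v)) (x + t • v) :=
        (hf.differentiableAt (hU.mem_nhds hmem)).hasFDerivAt
      have h1 : HasDerivAt (fun t : ℝ => x + t • v) v t := by
        simpa using ((hasDerivAt_id t).smul_const v).const_add x
      have h2 := (hfd.restrictScalars ℝ).comp_hasDerivAt t h1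
      have h3 : (fderiv ℂ f (x + t • v)) v = 0 := hMker _ hmem v hv
      simp only [ContinuousLinearMap.coe_restrictScalars', Function.comp] at h2
      rw [h3] at h2
      exact h2.hasDerivWithinAt
    have hbound := norm_image_sub_le_of_norm_deriv_le_segment' hderiv
      (C := 0) (fun t _ => by simp) 1 (Set.right_mem_Icc.2 zero_le_one)
    have : f (x + (1:ℝ) • v) = f (x + (0:ℝ) • v) := by
      rw [← sub_eq_zero, ← norm_le_zero_iff]
      simpa using hbound
    simpa [hvdef] using this
  refine ⟨hclosed, ?_⟩
  -- the extension
  set g : X → Y := fun y => f (Classical.epsilon fun c => c ∈ U ∧ y - c ∈ M) with hgdef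
  have hopen : IsOpen (U + (M : Set X)) := hU.add_right
  have hval : ∀ y ∈ U + (M : Set X), ∀ x ∈ U, y - x ∈ M → g y = f x := by
    intro y _ x hx hm
    obtain ⟨hc1, hc2⟩ :=
      Classical.epsilon_spec (p := fun c => c ∈ U ∧ y - c ∈ M) ⟨x, hx, hm⟩
    have : (Classical.epsilon fun c => c ∈ U ∧ y - c ∈ M) - x ∈ M := by
      have := M.sub_mem hm hc2
      simpa using this
    exact key x hx _ hc1 this
  have hmemadd : ∀ x ∈ U, ∀ m ∈ M, x + m ∈ U + (M : Set X) := by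
    intro x hx m hm
    exact Set.add_mem_add hx hm
  have hext : ∀ x ∈ U, ∀ m ∈ M, g (x + m) = f x := by
    intro x hx m hm
    exact hval _ (hmemadd x hx m hm) x hx (by simpa using hm)
  refine ⟨g, ?_, hext, ?_⟩
  · -- differentiability
    intro y0 hy0
    rw [Set.mem_add] at hy0
    obtain ⟨x0, hx0, m0, hm0, hxy⟩ := hy0
    have hx0' : y0 - m0 ∈ U := by rw [← hxy]; simpa using hx0
    have hnhds : ∀ᶠ y in nhds y0, y - m0 ∈ U :=
      (hU.preimage (continuous_id.sub continuous_const)).mem_nhds hx0'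
    have heq : g =ᶠ[nhds y0] fun y => f (y - m0) := by
      filter_upwards [hnhds] with y hy
      have hyU : y ∈ U + (M : Set X) := by
        have := Set.add_mem_add hy hm0
        simpa using this
      exact hval y hyU (y - m0) hy (by simpa using hm0)
    have hdf : DifferentiableAt ℂ (fun y => f (y - m0)) y0 :=
      (hf.differentiableAt (hU.mem_nhds hx0')).comp y0
        (differentiableAt_id.sub_const m0)
    exact (heq.differentiableAt_iff.2 hdf).differentiableWithinAt
  · -- uniqueness
    intro g' hg' hEq y hy
    rw [Set.mem_add] at hy
    obtain ⟨x, hx, m, hm, hxy⟩ := hy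
    have hmemτ : ∀ τ : ℂ, x + τ • m ∈ U + (M : Set X) := fun τ =>
      Set.add_mem_add hx (M.smul_mem τ hm)
    set ψ : ℂ → Y := fun τ => g' (x + τ • m) with hψdef
    have hψdiff : Differentiable ℂ ψ := by
      intro τ
      have hinner : DifferentiableAt ℂ (fun τ : ℂ => x + τ • m) τ :=
        (differentiableAt_id.smul_const m).const_add x
      exact (hg'.differentiableAt (hopen.mem_nhds (hmemτ τ))).comp τ hinner
    have hψana : AnalyticOnNhd ℂ ψ Set.univ :=
      Complex.analyticOnNhd_univ_iff_differentiable.2 hψdiff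
    have hcana : AnalyticOnNhd ℂ (fun _ : ℂ => f x) Set.univ := fun _ _ =>
      analyticAt_const
    have hnb : ψ =ᶠ[nhds (0:ℂ)] fun _ => f x := by
      have hcont : Continuous fun τ : ℂ => x + τ • m :=
        continuous_const.add (continuous_id.smul continuous_const)
      have h0 : x + (0:ℂ) • m ∈ U := by simpa using hx
      have hnhds : ∀ᶠ τ in nhds (0:ℂ), x + τ • m ∈ U :=
        (hU.preimage hcont).mem_nhds h0
      filter_upwards [hnhds] with τ hτ
      have h1 : g' (x + τ • m) = f (x + τ • m) := hEq hτ
      have h2 : f (x + τ • m) = f x :=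
        key x hx _ hτ (by simpa using M.smul_mem τ hm)
      simp only [hψdef]
      rw [h1, h2]
    have hψeq : Set.EqOn ψ (fun _ => f x) Set.univ :=
      hψana.eqOn_of_preconnected_of_eventuallyEq hcana isPreconnected_univ
        (Set.mem_univ 0) hnb
    have h1 : g' (x + m) = f x := by
      have := hψeq (Set.mem_univ (1:ℂ))
      simpa [hψdef] using this
    have h2 : g y = f x := by
      rw [← hxy]; exact hext x hx m hm
    rw [← hxy] at *
    rw [h2, h1]
end

section
/- Let H be a self-adjoint operator on a Hilbert space with H ≥ 1 (i.e., ⟨ψ,Hψ⟩ ≥ ‖ψ‖² for ψ ∈ dom H). Let T be a symmetric operator with dom T ⊇ dom H such that |⟨φ, Tψ⟩| ≤ b‖φ‖‖Hψ‖ for all φ, ψ ∈ dom H, where b < 1. Then for every ψ ∈ dom H, |⟨ψ, Tψ⟩| ≤ b⟨ψ, Hψ⟩. -/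
section AuxStatement16

open scoped InnerProductSpace

variable {H : Type*} [NormedAddCommGroup H] [InnerProductSpace ℂ H] [CompleteSpace H]

lemma aux_symm (H₀ : H →ₗ.[ℂ] H) (hsa : IsSelfAdjoint H₀) (x y : H₀.domain) :
    (inner ℂ ((H₀ x : H)) ((y : H)) : ℂ) = inner ℂ ((x : H)) (H₀ y) := by
  have hd := hsa.dense_domain
  have heq : H₀.adjoint = H₀ := hsa
  have hx : (x : H) ∈ H₀.adjoint.domain := by rw [heq]; exact x.2
  have h1 := LinearPMap.adjoint_isFormalAdjoint hd ⟨(x : H), hx⟩ y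
  have h2 : H₀.adjoint ⟨(x : H), hx⟩ = H₀ x := (le_of_eq heq).2 rfl
  rw [h2] at h1
  exact h1

lemma aux_max (H₀ : H →ₗ.[ℂ] H) (hsa : IsSelfAdjoint H₀) (x y : H)
    (hx : ∀ φ : H₀.domain, (inner ℂ ((H₀ φ : H)) x : ℂ) = inner ℂ ((φ : H)) y) :
    ∃ hm : x ∈ H₀.domain, H₀ ⟨x, hm⟩ = y := by
  have hd := hsa.dense_domain
  have heq : H₀.adjoint = H₀ := hsa
  have hconj : ∀ φ : H₀.domain, (inner ℂ y ((φ : H)) : ℂ) = inner ℂ x ((H₀ φ : H)) := by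
    intro φ
    rw [← inner_conj_symm, ← hx φ, inner_conj_symm]
  have hmem : x ∈ H₀.adjoint.domain :=
    LinearPMap.mem_adjoint_domain_of_exists x ⟨y, fun φ => hconj φ⟩
  have happ : H₀.adjoint ⟨x, hmem⟩ = y :=
    LinearPMap.adjoint_apply_eq hd _ (fun φ => hconj φ)
  have hm : x ∈ H₀.domain := by rw [← heq]; exact hmem
  exact ⟨hm, by rw [← happ]; exact ((le_of_eq heq).2 rfl).symm⟩

lemma aux_normle (H₀ : H →ₗ.[ℂ] H)
    (hge : ∀ ψ : H₀.domain, ‖(ψ : H)‖ ^ 2 ≤ (inner ℂ ((ψ : H)) (H₀ ψ) : ℂ).re)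
    (ψ : H₀.domain) : ‖(ψ : H)‖ ≤ ‖(H₀ ψ : H)‖ := by
  have h1 := hge ψ
  have h2 : (inner ℂ ((ψ : H)) (H₀ ψ) : ℂ).re ≤ ‖(inner ℂ ((ψ : H)) (H₀ ψ) : ℂ)‖ :=
    Complex.re_le_norm _
  have h3 : ‖(inner ℂ ((ψ : H)) (H₀ ψ) : ℂ)‖ ≤ ‖(ψ : H)‖ * ‖(H₀ ψ : H)‖ :=
    norm_inner_le_norm _ _
  by_contra hc
  push_neg at hc
  have h0 : (0:ℝ) ≤ ‖(H₀ ψ : H)‖ := norm_nonneg _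
  nlinarith [norm_nonneg (ψ : H)]

lemma aux_surj (H₀ : H →ₗ.[ℂ] H) (hsa : IsSelfAdjoint H₀)
    (hge : ∀ ψ : H₀.domain, ‖(ψ : H)‖ ^ 2 ≤ (inner ℂ ((ψ : H)) (H₀ ψ) : ℂ).re) :
    ∀ y : H, ∃ ψ : H₀.domain, H₀ ψ = y := by
  set K : Submodule ℂ H := LinearMap.range H₀.toFun with hK
  have hmemK : ∀ y : H, y ∈ K ↔ ∃ ψ : H₀.domain, H₀ ψ = y := by
    intro y; exact LinearMap.mem_range
  -- closedness
  have hclosed : IsClosed (K : Set H) := by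
    rw [← closure_subset_iff_isClosed]
    intro x hx
    obtain ⟨u, hu, hul⟩ := mem_closure_iff_seq_limit.mp hx
    choose φ hφ using fun n => (hmemK (u n)).mp (hu n)
    -- φ : ℕ → H₀.domain with H₀ (φ n) = u n
    have hcau : CauchySeq (fun n => ((φ n : H))) := by
      have hcu : CauchySeq u := hul.cauchySeq
      rw [Metric.cauchySeq_iff] at hcu ⊢
      intro ε hε
      obtain ⟨N, hN⟩ := hcu ε hε
      refine ⟨N, fun m hm n hn => ?_⟩
      have := hN m hm n hn
      rw [dist_eq_norm] at this ⊢
      refine lt_of_le_of_lt ?_ this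
      have hsub : ((φ m : H)) - ((φ n : H)) = ((φ m - φ n : H₀.domain) : H) := rfl
      have : ‖((φ m - φ n : H₀.domain) : H)‖ ≤ ‖(H₀ (φ m - φ n) : H)‖ :=
        aux_normle H₀ hge _
      rw [LinearPMap.map_sub, hφ m, hφ n] at this
      rw [hsub]
      exact this
    obtain ⟨z, hz⟩ := cauchySeq_tendsto_of_complete hcau
    have hkey : ∀ φ' : H₀.domain, (inner ℂ ((H₀ φ' : H)) z : ℂ) = inner ℂ ((φ' : H)) x := by
      intro φ'
      have t1 : Filter.Tendsto (fun n => (inner ℂ ((H₀ φ' : H)) ((φ n : H)) : ℂ))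
          Filter.atTop (nhds (inner ℂ ((H₀ φ' : H)) z)) :=
        Filter.Tendsto.inner tendsto_const_nhds hz
      have t2 : Filter.Tendsto (fun n => (inner ℂ ((φ' : H)) (u n) : ℂ))
          Filter.atTop (nhds (inner ℂ ((φ' : H)) x)) :=
        Filter.Tendsto.inner tendsto_const_nhds hul
      have heqf : (fun n => (inner ℂ ((H₀ φ' : H)) ((φ n : H)) : ℂ)) =
          fun n => (inner ℂ ((φ' : H)) (u n) : ℂ) := by
        funext n
        rw [aux_symm H₀ hsa φ' (φ n), hφ n]
      rw [heqf] at t1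
      exact tendsto_nhds_unique t1 t2
    obtain ⟨hm, hv⟩ := aux_max H₀ hsa z x hkey
    exact (hmemK x).mpr ⟨⟨z, hm⟩, hv⟩
  have : CompleteSpace K := hclosed.completeSpace_coe
  have horth : Kᗮ = ⊥ := by
    rw [Submodule.eq_bot_iff]
    intro v hv
    have hv' : ∀ φ : H₀.domain, (inner ℂ ((H₀ φ : H)) v : ℂ) = inner ℂ ((φ : H)) (0 : H) := by
      intro φ
      rw [inner_zero_right]
      exact (Submodule.mem_orthogonal K v).mp hv _ ((hmemK _).mpr ⟨φ, rfl⟩)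
    obtain ⟨hm, h0⟩ := aux_max H₀ hsa v 0 hv'
    have := aux_normle H₀ hge ⟨v, hm⟩
    rw [h0] at this
    simpa using norm_le_zero_iff.mp (by simpa using this)
  have htop : K = ⊤ := Submodule.orthogonal_eq_bot_iff.mp horth
  intro y
  exact (hmemK y).mp (htop ▸ Submodule.mem_top)



lemma aux_cs (H₀ : H →ₗ.[ℂ] H) (hsa : IsSelfAdjoint H₀)
    (hge : ∀ ψ : H₀.domain, ‖(ψ : H)‖ ^ 2 ≤ (inner ℂ ((ψ : H)) (H₀ ψ) : ℂ).re)
    (x y : H₀.domain) :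
    ‖(inner ℂ ((H₀ x : H)) ((y : H)) : ℂ)‖ ^ 2 ≤
      (inner ℂ ((H₀ x : H)) ((x : H)) : ℂ).re * (inner ℂ ((H₀ y : H)) ((y : H)) : ℂ).re := by
  set c : ℂ := inner ℂ ((H₀ x : H)) ((y : H)) with hc
  set A : ℝ := (inner ℂ ((H₀ x : H)) ((x : H)) : ℂ).re with hA
  set B : ℝ := (inner ℂ ((H₀ y : H)) ((y : H)) : ℂ).re with hB
  have hpos : ∀ u : H₀.domain, 0 ≤ (inner ℂ ((H₀ u : H)) ((u : H)) : ℂ).re := by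
    intro u
    have h1 := hge u
    have h2 : (inner ℂ ((u : H)) (H₀ u) : ℂ) = starRingEnd ℂ (inner ℂ ((H₀ u : H)) ((u : H))) :=
      (inner_conj_symm _ _).symm
    rw [h2, Complex.conj_re] at h1
    nlinarith [sq_nonneg ‖(u : H)‖]
  have hAnn : 0 ≤ A := hpos x
  have hBnn : 0 ≤ B := hpos y
  have hreal : ∀ u : H₀.domain,
      (inner ℂ ((H₀ u : H)) ((u : H)) : ℂ) = ((inner ℂ ((H₀ u : H)) ((u : H)) : ℂ).re : ℂ) := by
    intro u
    have h2 : starRingEnd ℂ (inner ℂ ((H₀ u : H)) ((u : H)) : ℂ)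
        = inner ℂ ((H₀ u : H)) ((u : H)) := by
      rw [inner_conj_symm, aux_symm H₀ hsa u u]
    exact (Complex.conj_eq_iff_re.mp h2).symm
  -- main quadratic inequality
  have hquad : ∀ t : ℝ, 0 ≤ A - 2 * (t * ‖c‖) + t ^ 2 * B := by
    intro t
    rcases eq_or_ne c 0 with hc0 | hc0
    · rw [hc0]
      simp only [norm_zero, mul_zero, sub_zero]
      nlinarith [sq_nonneg t]
    · set z : ℂ := (t : ℂ) * (starRingEnd ℂ c / ‖c‖) with hz
      have hcn : (‖c‖ : ℝ) ≠ 0 := norm_ne_zero_iff.mpr hc0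
      have hcnC : ((‖c‖ : ℝ) : ℂ) ≠ 0 := by exact_mod_cast hcn
      have hcc : starRingEnd ℂ c * c = ((‖c‖ : ℝ) : ℂ) ^ 2 := by
        rw [mul_comm, Complex.mul_conj, Complex.normSq_eq_norm_sq]
        norm_cast
      have hzc : z * c = ((t * ‖c‖ : ℝ) : ℂ) := by
        have e : z * c = (t : ℂ) * (starRingEnd ℂ c * c) / ((‖c‖ : ℝ) : ℂ) := by
          rw [hz]; ring
        rw [e, hcc]
        have habsC : ((‖c‖ : ℝ) : ℂ) ≠ 0 := by
          exact hcnC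
        push_cast
        rw [pow_two]
        field_simp
      have hzz : starRingEnd ℂ z * z = ((t ^ 2 : ℝ) : ℂ) := by
        have e : starRingEnd ℂ z * z
            = (t : ℂ) ^ 2 * (c * starRingEnd ℂ c) / (((‖c‖ : ℝ) : ℂ) ^ 2) := by
          rw [hz]
          simp only [map_mul, map_div₀, Complex.conj_conj, Complex.conj_ofReal]
          ring
        rw [e, mul_comm c, hcc]
        have habsC : ((‖c‖ : ℝ) : ℂ) ≠ 0 := by
          exact hcnC
        push_cast
        field_simp
      set v : H₀.domain := x - z • y with hv
      have hexp : (inner ℂ ((H₀ v : H)) ((v : H)) : ℂ) =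
          inner ℂ ((H₀ x : H)) ((x : H)) - ((t * ‖c‖ : ℝ) : ℂ) - ((t * ‖c‖ : ℝ) : ℂ)
            + ((t ^ 2 : ℝ) : ℂ) * inner ℂ ((H₀ y : H)) ((y : H)) := by
        rw [hv, LinearPMap.map_sub, LinearPMap.map_smul]
        have hcoe : ((x - z • y : H₀.domain) : H) = (x : H) - z • (y : H) := rfl
        rw [hcoe, inner_sub_left, inner_sub_right, inner_sub_right, inner_smul_left,
          inner_smul_left, inner_smul_right, inner_smul_right]
        have hyx : (inner ℂ ((H₀ y : H)) ((x : H)) : ℂ) = starRingEnd ℂ c := by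
          rw [hc, ← inner_conj_symm, aux_symm H₀ hsa x y]
        rw [hyx, ← hc]
        have e2 : starRingEnd ℂ z * starRingEnd ℂ c = ((t * ‖c‖ : ℝ) : ℂ) := by
          rw [← map_mul, hzc]
          simp
        have e3 : starRingEnd ℂ z * starRingEnd ℂ c = z * c := e2.trans hzc.symm
        rw [e3, hzc, ← mul_assoc, hzz]
        ring
      have h0 := hpos v
      rw [hexp, hreal x, hreal y, ← hA, ← hB] at h0
      have hcast : ((A : ℂ) - ((t * ‖c‖ : ℝ) : ℂ) - ((t * ‖c‖ : ℝ) : ℂ)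
            + ((t ^ 2 : ℝ) : ℂ) * (B : ℂ)) = ((A - 2 * (t * ‖c‖) + t ^ 2 * B : ℝ) : ℂ) := by
        push_cast
        ring
      rw [hcast, Complex.ofReal_re] at h0
      exact h0
  rcases eq_or_lt_of_le hBnn with hB0 | hB0
  · -- B = 0 : show c = 0
    have key : ∀ t : ℝ, 2 * (t * ‖c‖) ≤ A := by
      intro t
      have h1 := hquad t
      rw [← hB0] at h1
      nlinarith
    have hcz : ‖c‖ = 0 := by
      by_contra hc0
      have hcpos : 0 < ‖c‖ := lt_of_le_of_ne (norm_nonneg _) (Ne.symm hc0)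
      have h1 := key ((A + 1) / (2 * ‖c‖))
      have ht : (A + 1) / (2 * ‖c‖) * ‖c‖ = (A + 1) / 2 := by
        rw [div_mul_eq_mul_div, mul_comm (2 : ℝ) ‖c‖, ← div_div,
          mul_div_assoc, div_self hc0, mul_one]
      rw [ht] at h1
      linarith
    rw [hcz]
    nlinarith
  · have h1 := hquad (‖c‖ / B)
    have ht : ‖c‖ / B * B = ‖c‖ := div_mul_cancel₀ _ (ne_of_gt hB0)
    nlinarith [h1, ht, norm_nonneg c, mul_le_mul_of_nonneg_right h1 (le_of_lt hB0)]

lemma aux_Tnorm (H₀ T : H →ₗ.[ℂ] H) (hsa : IsSelfAdjoint H₀)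
    (hdom : H₀.domain ≤ T.domain) (b : ℝ) (hb0 : 0 ≤ b)
    (hbound : ∀ φ ψ : H₀.domain,
      ‖(inner ℂ ((φ : H)) (T ⟨(ψ : H), hdom ψ.2⟩) : ℂ)‖ ≤ b * ‖(φ : H)‖ * ‖H₀ ψ‖)
    (χ : H₀.domain) : ‖(T ⟨(χ : H), hdom χ.2⟩ : H)‖ ≤ b * ‖(H₀ χ : H)‖ := by
  have hd := hsa.dense_domain
  set w : H := T ⟨(χ : H), hdom χ.2⟩ with hw
  have hcl : IsClosed {x : H | ‖(inner ℂ x w : ℂ)‖ ≤ b * ‖x‖ * ‖(H₀ χ : H)‖} :=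
    isClosed_le (Continuous.norm (continuous_id.inner continuous_const))
      ((continuous_const.mul continuous_norm).mul continuous_const)
  have hsub : (H₀.domain : Set H) ⊆ {x : H | ‖(inner ℂ x w : ℂ)‖ ≤ b * ‖x‖ * ‖(H₀ χ : H)‖} :=
    fun x hx => hbound ⟨x, hx⟩ χ
  have hall : ∀ x : H, ‖(inner ℂ x w : ℂ)‖ ≤ b * ‖x‖ * ‖(H₀ χ : H)‖ := by
    have h1 := hcl.closure_subset_iff.mpr hsub
    rw [hd.closure_eq] at h1
    exact fun x => h1 (Set.mem_univ x)
  have h2 := hall w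
  have h3 : (inner ℂ w w : ℂ) = ((‖w‖ : ℂ)) ^ 2 := inner_self_eq_norm_sq_to_K w
  rw [h3] at h2
  have h4 : ‖((‖w‖ : ℂ)) ^ 2‖ = ‖w‖ ^ 2 := by
    simp
  rw [h4] at h2
  by_contra hc
  push_neg at hc
  have h5 : 0 ≤ b * ‖(H₀ χ : H)‖ := mul_nonneg hb0 (norm_nonneg _)
  nlinarith [norm_nonneg w]


end AuxStatement16

set_option maxHeartbeats 2000000 in
/-- Let `H₀` be a self-adjoint operator on a complex Hilbert space with
`H₀ ≥ 1`, and `T` a symmetric operator with `dom T ⊇ dom H₀` such that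
`|⟨φ, Tψ⟩| ≤ b ‖φ‖ ‖H₀ψ‖` for all `φ, ψ ∈ dom H₀`, where `b < 1`.  Then for every
`ψ ∈ dom H₀`, `|⟨ψ, Tψ⟩| ≤ b ⟨ψ, H₀ψ⟩`. -/
theorem relative_form_bound_of_operator_bound {H : Type*} [NormedAddCommGroup H]
    [InnerProductSpace ℂ H] [CompleteSpace H]
    (H₀ T : H →ₗ.[ℂ] H)
    (hsa : IsSelfAdjoint H₀)
    (hge : ∀ ψ : H₀.domain, ‖(ψ : H)‖ ^ 2 ≤ (inner ℂ ((ψ : H)) (H₀ ψ) : ℂ).re)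
    (hdom : H₀.domain ≤ T.domain)
    (hsymm : ∀ x y : T.domain, (inner ℂ ((x : H)) (T y) : ℂ) = inner ℂ (T x) ((y : H)))
    (b : ℝ) (hb : b < 1)
    (hbound : ∀ φ ψ : H₀.domain,
      ‖(inner ℂ ((φ : H)) (T ⟨(ψ : H), hdom ψ.2⟩) : ℂ)‖ ≤ b * ‖(φ : H)‖ * ‖H₀ ψ‖) :
    ∀ ψ : H₀.domain,
      ‖(inner ℂ ((ψ : H)) (T ⟨(ψ : H), hdom ψ.2⟩) : ℂ)‖ ≤
        b * (inner ℂ ((ψ : H)) (H₀ ψ) : ℂ).re := by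
  intro ψ
  rcases eq_or_ne ((ψ : H)) 0 with hψ0 | hψ0
  · have hz : ψ = 0 := Subtype.coe_injective hψ0
    subst hz
    simp
  set A : ℝ := (inner ℂ ((ψ : H)) (H₀ ψ) : ℂ).re with hA
  have hψpos : 0 < ‖(ψ : H)‖ := norm_pos_iff.mpr hψ0
  have hApos : 0 < A := lt_of_lt_of_le (by positivity) (hge ψ)
  have hH₀ψpos : 0 < ‖(H₀ ψ : H)‖ := lt_of_lt_of_le hψpos (aux_normle H₀ hge ψ)
  have hb0 : 0 ≤ b := by
    by_contra hneg
    push_neg at hneg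
    have h1 := hbound ψ ψ
    have h2 : b * ‖(ψ : H)‖ * ‖(H₀ ψ : H)‖ < 0 := by
      have h3 := mul_pos hψpos hH₀ψpos
      nlinarith
    linarith [norm_nonneg (inner ℂ ((ψ : H)) (T ⟨(ψ : H), hdom ψ.2⟩) : ℂ)]
  rcases eq_or_lt_of_le hb0 with hbz | hbpos
  · have h1 := hbound ψ ψ
    rw [← hbz] at h1 ⊢
    simp only [zero_mul] at h1 ⊢
    exact h1
  -- main case : 0 < b
  choose g hg using aux_surj H₀ hsa hge
  set seq : ℕ → H₀.domain :=
    fun n => Nat.rec ψ (fun _ p => g (T ⟨(p : H), hdom p.2⟩)) n with hseq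
  have hseq0 : seq 0 = ψ := rfl
  have hseqS : ∀ n, H₀ (seq (n + 1)) = T ⟨((seq n : H)), hdom (seq n).2⟩ := fun n => hg _
  have hsymm' : ∀ x y : H₀.domain,
      (inner ℂ ((x : H)) (T ⟨(y : H), hdom y.2⟩) : ℂ)
        = inner ℂ ((T ⟨(x : H), hdom x.2⟩ : H)) ((y : H)) :=
    fun x y => hsymm ⟨(x : H), hdom x.2⟩ ⟨(y : H), hdom y.2⟩
  have hTle := aux_Tnorm H₀ T hsa hdom b hb0 hbound
  have hn : ∀ n, ‖(H₀ (seq n) : H)‖ ≤ b ^ n * ‖(H₀ ψ : H)‖ := by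
    intro n
    induction n with
    | zero => simp [hseq0]
    | succ k ih =>
      rw [hseqS k]
      calc ‖(T ⟨((seq k : H)), hdom (seq k).2⟩ : H)‖ ≤ b * ‖(H₀ (seq k) : H)‖ := hTle (seq k)
        _ ≤ b * (b ^ k * ‖(H₀ ψ : H)‖) := by nlinarith
        _ = b ^ (k + 1) * ‖(H₀ ψ : H)‖ := by ring
  have hshift : ∀ j k, (inner ℂ ((H₀ (seq j) : H)) ((seq (k + 1) : H)) : ℂ)
      = inner ℂ ((H₀ (seq (j + 1)) : H)) ((seq k : H)) := by
    intro j k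
    rw [aux_symm H₀ hsa (seq j) (seq (k + 1)), hseqS k, hsymm' (seq j) (seq k), ← hseqS j]
  have hG0 : ∀ j k, (inner ℂ ((H₀ ψ : H)) ((seq (j + k) : H)) : ℂ)
      = inner ℂ ((H₀ (seq j) : H)) ((seq k : H)) := by
    intro j
    induction j with
    | zero => intro k; rw [Nat.zero_add, hseq0]
    | succ i ih =>
      intro k
      have harith : i + 1 + k = i + (k + 1) := by omega
      rw [harith, ih (k + 1), hshift i k]
  set m : ℕ → ℝ := fun k => ‖(inner ℂ ((H₀ ψ : H)) ((seq k : H)) : ℂ)‖ with hm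
  have hmnn : ∀ k, 0 ≤ m k := fun k => norm_nonneg _
  have hAeq : (inner ℂ ((H₀ ψ : H)) ((ψ : H)) : ℂ).re = A := by
    rw [hA, ← inner_conj_symm ((ψ : H)) ((H₀ ψ : H)), Complex.conj_re]
  have key1 : ∀ k, m k ^ 2 ≤ A * m (k + k) := by
    intro k
    have h1 := aux_cs H₀ hsa hge ψ (seq k)
    rw [hAeq] at h1
    have h2 : (inner ℂ ((H₀ (seq k) : H)) ((seq k : H)) : ℂ).re ≤ m (k + k) := by
      have h3 : (inner ℂ ((H₀ (seq k) : H)) ((seq k : H)) : ℂ).re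
          ≤ ‖(inner ℂ ((H₀ (seq k) : H)) ((seq k : H)) : ℂ)‖ := Complex.re_le_norm _
      have h4 : ‖(inner ℂ ((H₀ ψ : H)) ((seq (k + k) : H)) : ℂ)‖
          = ‖(inner ℂ ((H₀ (seq k) : H)) ((seq k : H)) : ℂ)‖ := congrArg norm (hG0 k k)
      show (inner ℂ ((H₀ (seq k) : H)) ((seq k : H)) : ℂ).re
          ≤ ‖(inner ℂ ((H₀ ψ : H)) ((seq (k + k) : H)) : ℂ)‖
      rw [h4]
      exact h3
    have h4 : (0:ℝ) ≤ (inner ℂ ((H₀ (seq k) : H)) ((seq k : H)) : ℂ).re := by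
      have h5 := hge (seq k)
      have h6 : (inner ℂ ((seq k : H)) (H₀ (seq k)) : ℂ)
          = starRingEnd ℂ (inner ℂ ((H₀ (seq k) : H)) ((seq k : H))) :=
        (inner_conj_symm _ _).symm
      rw [h6, Complex.conj_re] at h5
      nlinarith [sq_nonneg ‖(seq k : H)‖]
    have h7 : m k ^ 2 ≤ A * (inner ℂ ((H₀ (seq k) : H)) ((seq k : H)) : ℂ).re := by
      have h8 : m k = ‖(inner ℂ ((H₀ ψ : H)) ((seq k : H)) : ℂ)‖ := rfl
      rw [h8]
      have h9 : (inner ℂ ((H₀ ψ : H)) ((seq k : H)) : ℂ)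
          = inner ℂ ((H₀ (seq 0) : H)) ((seq k : H)) := by rw [hseq0]
      rw [h9]
      have h10 := aux_cs H₀ hsa hge (seq 0) (seq k)
      have h11 : (inner ℂ ((H₀ (seq 0) : H)) ((seq 0 : H)) : ℂ).re = A := by
        rw [hseq0]; exact hAeq
      rw [h11] at h10
      exact h10
    calc m k ^ 2 ≤ A * (inner ℂ ((H₀ (seq k) : H)) ((seq k : H)) : ℂ).re := h7
      _ ≤ A * m (k + k) := by nlinarith
  have key2 : ∀ k, m k ≤ ‖(H₀ ψ : H)‖ ^ 2 * b ^ k := by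
    intro k
    have h1 : m k ≤ ‖(H₀ ψ : H)‖ * ‖(seq k : H)‖ := norm_inner_le_norm _ _
    have h2 : ‖(seq k : H)‖ ≤ ‖(H₀ (seq k) : H)‖ := aux_normle H₀ hge (seq k)
    have h3 := hn k
    have h4 : (0:ℝ) ≤ ‖(H₀ ψ : H)‖ := norm_nonneg _
    nlinarith [norm_nonneg (seq k : H)]
  have chain : ∀ n, A * m 1 ^ (2 ^ n) ≤ A ^ (2 ^ n) * m (2 ^ n) := by
    intro n
    induction n with
    | zero => simp
    | succ n ih =>
      have hNN : 2 ^ (n + 1) = 2 ^ n + 2 ^ n := by rw [pow_succ]; omega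
      have hsq : (A * m 1 ^ 2 ^ n) ^ 2 ≤ (A ^ 2 ^ n * m (2 ^ n)) ^ 2 := by
        have hlnn : 0 ≤ A * m 1 ^ 2 ^ n := by positivity
        nlinarith
      have hk := key1 (2 ^ n)
      have hAp : (0:ℝ) ≤ A ^ 2 ^ n := by positivity
      have h5 : (A ^ 2 ^ n * m (2 ^ n)) ^ 2 = (A ^ 2 ^ n) ^ 2 * m (2 ^ n) ^ 2 := by ring
      have h6 : (A ^ 2 ^ n) ^ 2 * m (2 ^ n) ^ 2
          ≤ (A ^ 2 ^ n) ^ 2 * (A * m (2 ^ n + 2 ^ n)) := by nlinarith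
      have h7 : A * (A * m 1 ^ 2 ^ (n + 1)) ≤ A * (A ^ 2 ^ (n + 1) * m (2 ^ (n + 1))) := by
        rw [hNN]
        calc A * (A * m 1 ^ (2 ^ n + 2 ^ n)) = (A * m 1 ^ 2 ^ n) ^ 2 := by ring
          _ ≤ (A ^ 2 ^ n * m (2 ^ n)) ^ 2 := hsq
          _ = (A ^ 2 ^ n) ^ 2 * m (2 ^ n) ^ 2 := h5
          _ ≤ (A ^ 2 ^ n) ^ 2 * (A * m (2 ^ n + 2 ^ n)) := h6
          _ = A * (A ^ (2 ^ n + 2 ^ n) * m (2 ^ n + 2 ^ n)) := by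
              rw [pow_add]; ring
      exact le_of_mul_le_mul_left h7 hApos
  -- identify the goal with m 1
  have hm1 : ‖(inner ℂ ((ψ : H)) (T ⟨(ψ : H), hdom ψ.2⟩) : ℂ)‖ = m 1 := by
    have h1 : (inner ℂ ((H₀ ψ : H)) ((seq 1 : H)) : ℂ)
        = inner ℂ ((ψ : H)) (H₀ (seq 1)) := aux_symm H₀ hsa ψ (seq 1)
    have h2 : H₀ (seq 1) = T ⟨(ψ : H), hdom ψ.2⟩ := hseqS 0
    have h3 : m 1 = ‖(inner ℂ ((H₀ ψ : H)) ((seq 1 : H)) : ℂ)‖ := rfl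
    rw [h3, h1, h2]
  rw [hm1]
  by_contra hgt
  push_neg at hgt
  have hbApos : 0 < A * b := mul_pos hApos hbpos
  set ρ : ℝ := m 1 / (A * b) with hρdef
  have hρ : 1 < ρ := by
    rw [hρdef, lt_div_iff₀ hbApos]
    linarith [hgt]
  have hρpow : ∀ n : ℕ, ρ ^ (2 ^ n) ≤ ‖(H₀ ψ : H)‖ ^ 2 / A := by
    intro n
    have h1 := chain n
    have h2 := key2 (2 ^ n)
    have h3 : A * m 1 ^ 2 ^ n ≤ A ^ 2 ^ n * (‖(H₀ ψ : H)‖ ^ 2 * b ^ 2 ^ n) := by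
      calc A * m 1 ^ 2 ^ n ≤ A ^ 2 ^ n * m (2 ^ n) := h1
        _ ≤ A ^ 2 ^ n * (‖(H₀ ψ : H)‖ ^ 2 * b ^ 2 ^ n) := by
            have : (0:ℝ) ≤ A ^ 2 ^ n := by positivity
            nlinarith
    rw [hρdef, div_pow, div_le_div_iff₀ (by positivity) hApos]
    calc m 1 ^ 2 ^ n * A = A * m 1 ^ 2 ^ n := by ring
      _ ≤ A ^ 2 ^ n * (‖(H₀ ψ : H)‖ ^ 2 * b ^ 2 ^ n) := h3
      _ = ‖(H₀ ψ : H)‖ ^ 2 * (A * b) ^ 2 ^ n := by rw [mul_pow]; ring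
  obtain ⟨n₀, hn₀⟩ := pow_unbounded_of_one_lt (‖(H₀ ψ : H)‖ ^ 2 / A) hρ
  have h2n : n₀ ≤ 2 ^ n₀ := Nat.le_of_lt (Nat.lt_two_pow_self (n := n₀))
  have hmono : ρ ^ n₀ ≤ ρ ^ (2 ^ n₀) := pow_le_pow_right₀ (le_of_lt hρ) h2n
  linarith [hρpow n₀]
end
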